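/- Fix μ > 1, ν > 0 and 1/μ < q ≤ 1, and assume |⟨x†, u_k⟩_X| ≤ K₁ k^{−μ} and ‖f_k‖_{Y*} ≤ K₂ k^{ν} for all k ∈ supp(x†), with constants K₁, K₂ > 0. Then there exists a constant C > 0 such that for all 0 < t ≤ 1 the index function with uniform weights w_k = 1 satisfies φ_q(t) := 2 inf_{n∈ℕ} ( Σ_{k=n+1}^∞ |⟨x†, u_k⟩_X|^q + t^q Σ_{k∈S_n(x†)} ‖f_k‖_{Y*}^q ) ≤ C t^{(μq−1)/(μ+ν)}. -/

import Mathlib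

open scoped RealInnerProductSpace

/-- The penalty `R_{q,w}(x) = Σ_k w_k |⟨x, u_k⟩|^q`. -/
noncomputable def Rqw {X : Type*} [NormedAddCommGroup X] [InnerProductSpace ℝ X]
    (u : ℕ → X) (w : ℕ → ℝ) (q : ℝ) (x : X) : ℝ :=
  ∑' k : ℕ, w k * |⟪x, u k⟫| ^ q

/-- Membership `x ∈ M_{q,w}`, i.e. `R_{q,w}(x) < ∞`. -/
def MemMqw {X : Type*} [NormedAddCommGroup X] [InnerProductSpace ℝ X]
    (u : ℕ → X) (w : ℕ → ℝ) (q : ℝ) (x : X) : Prop :=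
  Summable fun k : ℕ => w k * |⟪x, u k⟫| ^ q

/-- The index function
`φ_{q,w}(t) = 2 inf_n ( Σ_{k ≥ n} w_k |⟨x†,u_k⟩|^q + t^q Σ_{k ∈ S_n(x†)} w_k ‖f_k‖^q )`,
where `S_n(x†)` consists of the indices `k < n` lying in the support of `x†`. -/
noncomputable def phiIdx {X Y : Type*} [NormedAddCommGroup X] [InnerProductSpace ℝ X]
    [NormedAddCommGroup Y] [NormedSpace ℝ Y]
    (u : ℕ → X) (w : ℕ → ℝ) (q : ℝ) (xdag : X) (f : ℕ → Y →L[ℝ] ℝ) (t : ℝ) : ℝ :=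
  2 * ⨅ n : ℕ, ((∑' k : ℕ, if n ≤ k then w k * |⟪xdag, u k⟫| ^ q else 0)
      + t ^ q * ∑ k ∈ Finset.filter (fun k => ⟪xdag, u k⟫ ≠ 0) (Finset.range n),
          w k * ‖f k‖ ^ q)

lemma aux_mvt {p : ℝ} (hp : 1 < p) {x : ℝ} (hx : 1 ≤ x) :
    (p - 1) * (x + 1) ^ (-p) ≤ x ^ (1 - p) - (x + 1) ^ (1 - p) := by
  have hx0 : (0:ℝ) < x := lt_of_lt_of_le one_pos hx
  obtain ⟨c, hc, hceq⟩ := exists_hasDerivAt_eq_slope (fun y : ℝ => y ^ (1 - p))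
      (fun y : ℝ => (1 - p) * y ^ (1 - p - 1)) (by linarith : x < x + 1)
      (ContinuousOn.rpow_const continuousOn_id fun y hy =>
        Or.inl (by have := hy.1; intro h; rw [h] at this; linarith))
      (fun y hy => Real.hasDerivAt_rpow_const (Or.inl (by have := hy.1; linarith [hx0] : y ≠ 0)))
  have hc0 : 0 < c := hx0.trans hc.1
  have h1 : (x + 1 : ℝ) ^ (-p) ≤ c ^ (-p) :=
    Real.rpow_le_rpow_of_nonpos hc0 hc.2.le (by linarith)
  have he : (1 - p - 1 : ℝ) = -p := by ring
  rw [he] at hceq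
  have hd : (x + 1 - x : ℝ) = 1 := by ring
  rw [hd, div_one] at hceq
  have h2 : (p - 1) * (x + 1) ^ (-p) ≤ (p - 1) * c ^ (-p) :=
    mul_le_mul_of_nonneg_left h1 (by linarith)
  nlinarith [hceq]

lemma aux_tail {p : ℝ} (hp : 1 < p) {n : ℕ} (hn : 1 ≤ n) (m : ℕ) :
    ∑ k ∈ Finset.range m, (if n ≤ k then ((k : ℝ) + 1) ^ (-p) else 0)
      ≤ (n : ℝ) ^ (1 - p) / (p - 1) := by
  have hfil : Finset.filter (fun k => n ≤ k) (Finset.range m) = Finset.Ico n m := by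
    ext k; simp [Finset.mem_Ico, Finset.mem_filter, Finset.mem_range]; omega
  rw [← Finset.sum_filter, hfil]
  have hstep : ∑ k ∈ Finset.Ico n m, ((k : ℝ) + 1) ^ (-p)
      ≤ ∑ k ∈ Finset.Ico n m, ((k : ℝ) ^ (1 - p) - ((k : ℝ) + 1) ^ (1 - p)) / (p - 1) := by
    apply Finset.sum_le_sum
    intro k hk
    have hk1 : (1 : ℝ) ≤ (k : ℝ) := by
      have := (Finset.mem_Ico.mp hk).1; exact_mod_cast le_trans hn this
    rw [le_div_iff₀ (by linarith : (0:ℝ) < p - 1)]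
    have := aux_mvt hp hk1
    linarith
  refine hstep.trans ?_
  rw [← Finset.sum_div]
  gcongr (?_ : ℝ) / _
  have htel : ∑ k ∈ Finset.Ico n m, (((k:ℕ) : ℝ) ^ (1 - p) - (((k:ℕ) : ℝ) + 1) ^ (1 - p))
      = ∑ i ∈ Finset.range (m - n), ((((n + i : ℕ)) : ℝ) ^ (1 - p) - (((n + i + 1 : ℕ)) : ℝ) ^ (1 - p)) := by
    rw [Finset.sum_Ico_eq_sum_range]
    apply Finset.sum_congr rfl
    intro i _
    push_cast
    ring_nf
  rw [htel]
  have := Finset.sum_range_sub' (fun i => (((n + i : ℕ)) : ℝ) ^ (1 - p)) (m - n)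
  simp only [Nat.add_zero] at this
  calc ∑ i ∈ Finset.range (m - n), ((((n + i : ℕ)) : ℝ) ^ (1 - p) - (((n + i + 1 : ℕ)) : ℝ) ^ (1 - p))
      = (n : ℝ) ^ (1 - p) - (((n + (m - n) : ℕ)) : ℝ) ^ (1 - p) := this
    _ ≤ (n : ℝ) ^ (1 - p) := by
        have : (0:ℝ) ≤ (((n + (m - n) : ℕ)) : ℝ) ^ (1 - p) := Real.rpow_nonneg (by positivity) _
        linarith

/-- **Remark 4.7, monomial decay.** If `|⟨x†, u_k⟩| ≤ K₁ k^{−μ}` and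
`‖f_k‖ ≤ K₂ k^{ν}` (with 1-based index `k`, here `k+1` for `k : ℕ`) for all
`k ∈ supp x†`, with `μ > 1`, `ν > 0`, `1/μ < q ≤ 1`, then with uniform weights `w_k = 1`
there is `C > 0` such that `φ_q(t) ≤ C t^{(μq−1)/(μ+ν)}` for all `0 < t ≤ 1`. -/
theorem phi_monomial_decay_rate
    {X Y : Type*} [NormedAddCommGroup X] [InnerProductSpace ℝ X] [CompleteSpace X]
    [NormedAddCommGroup Y] [NormedSpace ℝ Y]
    (u : ℕ → X) (hu : Orthonormal ℝ u)
    (xdag : X) (f : ℕ → Y →L[ℝ] ℝ)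
    (μ ν q : ℝ) (hμ : 1 < μ) (hν : 0 < ν) (hq : 1 / μ < q) (hq1 : q ≤ 1)
    (K₁ K₂ : ℝ) (hK₁ : 0 < K₁) (hK₂ : 0 < K₂)
    (hx : ∀ k : ℕ, ⟪xdag, u k⟫ ≠ 0 → |⟪xdag, u k⟫| ≤ K₁ * ((k : ℝ) + 1) ^ (-μ))
    (hfk : ∀ k : ℕ, ⟪xdag, u k⟫ ≠ 0 → ‖f k‖ ≤ K₂ * ((k : ℝ) + 1) ^ ν) :
    ∃ C : ℝ, 0 < C ∧ ∀ t : ℝ, 0 < t → t ≤ 1 →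
      phiIdx u (fun _ => (1 : ℝ)) q xdag f t ≤ C * t ^ ((μ * q - 1) / (μ + ν)) := by
  have hμ0 : (0:ℝ) < μ := by linarith
  have hq0 : (0:ℝ) < q := lt_trans (by positivity) hq
  have hp : 1 < μ * q := by
    have := (div_lt_iff₀ hμ0).mp hq
    nlinarith
  have hμν : (0:ℝ) < μ + ν := by linarith
  set α : ℝ := (μ * q - 1) / (μ + ν) with hα
  have hp1 : (0:ℝ) < μ * q - 1 := by linarith
  refine ⟨2 * (K₁ ^ q / (μ * q - 1) + K₂ ^ q * 2 ^ (ν * q + 1)), by positivity, ?_⟩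
  intro t ht ht1
  set r : ℝ := t ^ (-(1:ℝ) / (μ + ν)) with hrdef
  have hr0 : 0 < r := Real.rpow_pos_of_pos ht _
  have hexp_nonpos : -(1:ℝ) / (μ + ν) ≤ 0 := by
    rw [neg_div]; exact neg_nonpos.mpr (by positivity)
  have hr1 : 1 ≤ r := Real.one_le_rpow_of_pos_of_le_one_of_nonpos ht ht1 hexp_nonpos
  set n : ℕ := ⌈r⌉₊ with hndef
  have hnr : r ≤ (n : ℝ) := Nat.le_ceil r
  have hn2r : (n : ℝ) ≤ 2 * r := by
    have := Nat.ceil_lt_add_one hr0.le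
    have : (n : ℝ) < r + 1 := this
    linarith
  have hn1 : (1:ℝ) ≤ (n : ℝ) := hr1.trans hnr
  have hn1' : 1 ≤ n := by exact_mod_cast hn1
  -- the infimum is bounded below by 0
  set F : ℕ → ℝ := fun m => ((∑' k : ℕ, if m ≤ k then (1:ℝ) * |⟪xdag, u k⟫| ^ q else 0)
      + t ^ q * ∑ k ∈ Finset.filter (fun k => ⟪xdag, u k⟫ ≠ 0) (Finset.range m),
          (1:ℝ) * ‖f k‖ ^ q) with hF
  have hFnonneg : ∀ m, 0 ≤ F m := by
    intro m
    apply add_nonneg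
    · apply tsum_nonneg
      intro k
      split
      · positivity
      · exact le_refl 0
    · apply mul_nonneg (by positivity)
      apply Finset.sum_nonneg
      intro k _
      positivity
  have hbdd : BddBelow (Set.range F) := ⟨0, by rintro _ ⟨m, rfl⟩; exact hFnonneg m⟩
  have hphi : phiIdx u (fun _ => (1 : ℝ)) q xdag f t = 2 * ⨅ m : ℕ, F m := rfl
  rw [hphi]
  have hinf : (⨅ m : ℕ, F m) ≤ F n := ciInf_le hbdd n
  -- bound the tail
  have htail : (∑' k : ℕ, if n ≤ k then (1:ℝ) * |⟪xdag, u k⟫| ^ q else 0)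
      ≤ K₁ ^ q * ((n : ℝ) ^ (1 - μ * q) / (μ * q - 1)) := by
    apply Real.tsum_le_of_sum_range_le
    · intro k; split
      · positivity
      · exact le_refl 0
    · intro m
      have h1 : ∀ k ∈ Finset.range m,
          (if n ≤ k then (1:ℝ) * |⟪xdag, u k⟫| ^ q else 0)
            ≤ (if n ≤ k then K₁ ^ q * (((k : ℝ) + 1) ^ (-(μ * q))) else 0) := by
        intro k _
        split
        · rw [one_mul]
          by_cases hk : ⟪xdag, u k⟫ = 0
          · rw [hk, abs_zero, Real.zero_rpow hq0.ne']
            positivity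
          · calc |⟪xdag, u k⟫| ^ q ≤ (K₁ * ((k : ℝ) + 1) ^ (-μ)) ^ q :=
                  Real.rpow_le_rpow (abs_nonneg _) (hx k hk) hq0.le
              _ = K₁ ^ q * (((k : ℝ) + 1) ^ (-(μ * q))) := by
                  rw [Real.mul_rpow hK₁.le (Real.rpow_nonneg (by positivity) _),
                    ← Real.rpow_mul (by positivity), neg_mul]
        · exact le_refl 0
      calc ∑ k ∈ Finset.range m, (if n ≤ k then (1:ℝ) * |⟪xdag, u k⟫| ^ q else 0)
          ≤ ∑ k ∈ Finset.range m, (if n ≤ k then K₁ ^ q * (((k : ℝ) + 1) ^ (-(μ * q))) else 0) :=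
            Finset.sum_le_sum h1
        _ = K₁ ^ q * ∑ k ∈ Finset.range m, (if n ≤ k then (((k : ℝ) + 1) ^ (-(μ * q))) else 0) := by
            rw [Finset.mul_sum]
            apply Finset.sum_congr rfl
            intro k _
            rw [mul_ite, mul_zero]
        _ ≤ K₁ ^ q * ((n : ℝ) ^ (1 - μ * q) / (μ * q - 1)) := by
            apply mul_le_mul_of_nonneg_left (aux_tail hp hn1' m) (by positivity)
  -- bound the head
  have hhead : (∑ k ∈ Finset.filter (fun k => ⟪xdag, u k⟫ ≠ 0) (Finset.range n),
      (1:ℝ) * ‖f k‖ ^ q) ≤ (n : ℝ) * (K₂ ^ q * (n : ℝ) ^ (ν * q)) := by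
    have hterm : ∀ k ∈ Finset.filter (fun k => ⟪xdag, u k⟫ ≠ 0) (Finset.range n),
        (1:ℝ) * ‖f k‖ ^ q ≤ K₂ ^ q * (n : ℝ) ^ (ν * q) := by
      intro k hk
      obtain ⟨hkr, hknz⟩ := Finset.mem_filter.mp hk
      have hkn : (k : ℝ) + 1 ≤ (n : ℝ) := by
        have := Finset.mem_range.mp hkr
        exact_mod_cast Nat.succ_le_of_lt this
      rw [one_mul]
      calc ‖f k‖ ^ q ≤ (K₂ * ((k : ℝ) + 1) ^ ν) ^ q :=
            Real.rpow_le_rpow (norm_nonneg _) (hfk k hknz) hq0.le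
        _ = K₂ ^ q * (((k : ℝ) + 1) ^ (ν * q)) := by
            rw [Real.mul_rpow hK₂.le (Real.rpow_nonneg (by positivity) _),
              ← Real.rpow_mul (by positivity)]
        _ ≤ K₂ ^ q * (n : ℝ) ^ (ν * q) := by
            apply mul_le_mul_of_nonneg_left _ (by positivity)
            exact Real.rpow_le_rpow (by positivity) hkn (by positivity)
    calc (∑ k ∈ Finset.filter (fun k => ⟪xdag, u k⟫ ≠ 0) (Finset.range n), (1:ℝ) * ‖f k‖ ^ q)
        ≤ (Finset.filter (fun k => ⟪xdag, u k⟫ ≠ 0) (Finset.range n)).card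
            • (K₂ ^ q * (n : ℝ) ^ (ν * q)) := Finset.sum_le_card_nsmul _ _ _ hterm
      _ ≤ (n : ℝ) * (K₂ ^ q * (n : ℝ) ^ (ν * q)) := by
          rw [nsmul_eq_mul]
          apply mul_le_mul_of_nonneg_right _ (by positivity)
          have := Finset.card_filter_le (Finset.range n) (fun k => ⟪xdag, u k⟫ ≠ 0)
          rw [Finset.card_range] at this
          exact_mod_cast this
  -- convert to powers of t
  have htail2 : K₁ ^ q * ((n : ℝ) ^ (1 - μ * q) / (μ * q - 1)) ≤ K₁ ^ q / (μ * q - 1) * t ^ α := by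
    have h1 : (n : ℝ) ^ (1 - μ * q) ≤ r ^ (1 - μ * q) :=
      Real.rpow_le_rpow_of_nonpos hr0 hnr (by linarith)
    have h2 : r ^ (1 - μ * q) = t ^ α := by
      rw [hrdef, ← Real.rpow_mul ht.le]
      congr 1
      have hne : (μ + ν) ≠ 0 := hμν.ne'
      rw [hα, div_mul_eq_mul_div, div_eq_div_iff hne hne]
      ring
    calc K₁ ^ q * ((n : ℝ) ^ (1 - μ * q) / (μ * q - 1))
        ≤ K₁ ^ q * (t ^ α / (μ * q - 1)) := by
          apply mul_le_mul_of_nonneg_left _ (by positivity)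
          rw [← h2]
          gcongr (?_ : ℝ) / _ <;> first | exact h1 | linarith
      _ = K₁ ^ q / (μ * q - 1) * t ^ α := by ring
  have hhead2 : t ^ q * ((n : ℝ) * (K₂ ^ q * (n : ℝ) ^ (ν * q)))
      ≤ K₂ ^ q * 2 ^ (ν * q + 1) * t ^ α := by
    have hb1 : (n : ℝ) ^ (ν * q) ≤ (2 * r) ^ (ν * q) :=
      Real.rpow_le_rpow (by positivity) hn2r (by positivity)
    have hb2 : (n : ℝ) * (K₂ ^ q * (n : ℝ) ^ (ν * q)) ≤ (2 * r) * (K₂ ^ q * (2 * r) ^ (ν * q)) :=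
      mul_le_mul hn2r (mul_le_mul_of_nonneg_left hb1 (by positivity)) (by positivity)
        (by positivity)
    calc t ^ q * ((n : ℝ) * (K₂ ^ q * (n : ℝ) ^ (ν * q)))
        ≤ t ^ q * ((2 * r) * (K₂ ^ q * (2 * r) ^ (ν * q))) :=
          mul_le_mul_of_nonneg_left hb2 (by positivity)
      _ = K₂ ^ q * 2 ^ (ν * q + 1) * t ^ α := by
          rw [show (2 * r) * (K₂ ^ q * (2 * r) ^ (ν * q)) = K₂ ^ q * ((2 * r) ^ (ν * q) * (2 * r)) by ring]
          rw [← Real.rpow_add_one (by positivity : (2 * r) ≠ 0)]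
          rw [Real.mul_rpow (by norm_num : (0:ℝ) ≤ 2) hr0.le]
          rw [hrdef, ← Real.rpow_mul ht.le]
          rw [show t ^ q * (K₂ ^ q * (2 ^ (ν * q + 1) * t ^ (-1 / (μ + ν) * (ν * q + 1))))
              = K₂ ^ q * 2 ^ (ν * q + 1) * (t ^ q * t ^ (-1 / (μ + ν) * (ν * q + 1))) by ring]
          rw [← Real.rpow_add ht]
          congr 1
          have hne : (μ + ν) ≠ 0 := hμν.ne'
          field_simp
          rw [hα]; congr 1; ring
  have hh : t ^ q * (∑ k ∈ Finset.filter (fun k => ⟪xdag, u k⟫ ≠ 0) (Finset.range n),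
      (1:ℝ) * ‖f k‖ ^ q) ≤ K₂ ^ q * 2 ^ (ν * q + 1) * t ^ α :=
    le_trans (mul_le_mul_of_nonneg_left hhead (by positivity)) hhead2
  have hFn : F n ≤ K₁ ^ q / (μ * q - 1) * t ^ α + K₂ ^ q * 2 ^ (ν * q + 1) * t ^ α := by
    have := htail.trans htail2
    rw [hF]
    dsimp only
    linarith
  calc 2 * ⨅ m : ℕ, F m ≤ 2 * F n := by linarith
    _ ≤ 2 * (K₁ ^ q / (μ * q - 1) * t ^ α + K₂ ^ q * 2 ^ (ν * q + 1) * t ^ α) := by linarith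
    _ = 2 * (K₁ ^ q / (μ * q - 1) + K₂ ^ q * 2 ^ (ν * q + 1)) * t ^ α := by ring
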